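/- Let X be a compact Hausdorff space, ν a capacity on X, and ∗ a continuous t-norm. If φ, ψ : X → [0,1] are continuous comonotone functions, then ∫^{∨∗}(φ∨ψ) dν = (∫^{∨∗}φ dν) ∨ (∫^{∨∗}ψ dν), where ∨ denotes pointwise maximum. -/
import Mathlib


open Set

/-- A continuous triangular norm on `[0,1]`, modeled as a binary operation on `ℝ`
restricted to the unit interval. -/
structure Tnorm where
  op : ℝ → ℝ → ℝ
  mem' : ∀ a b : ℝ, a ∈ Set.Icc (0:ℝ) 1 → b ∈ Set.Icc (0:ℝ) 1 → op a b ∈ Set.Icc (0:ℝ) 1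
  comm' : ∀ a b : ℝ, op a b = op b a
  assoc' : ∀ a b c : ℝ, op (op a b) c = op a (op b c)
  mono' : ∀ a b c d : ℝ, a ≤ b → c ≤ d → op a c ≤ op b d
  one_id' : ∀ a ∈ Set.Icc (0:ℝ) 1, op a 1 = a
  cont' : Continuous fun p : ℝ × ℝ => op p.1 p.2

/-- An upper-semicontinuous capacity on a topological space `X`. -/
structure Capacity (X : Type*) [TopologicalSpace X] where
  toFun : Set X → ℝ
  nonneg' : ∀ A : Set X, 0 ≤ toFun A
  le_one' : ∀ A : Set X, toFun A ≤ 1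
  empty' : toFun (∅ : Set X) = 0
  univ' : toFun (Set.univ : Set X) = 1
  mono' : ∀ A B : Set X, A ⊆ B → toFun A ≤ toFun B
  usc' : ∀ F : Set X, IsClosed F → ∀ a : ℝ, toFun F < a →
    ∃ O : Set X, IsOpen O ∧ F ⊆ O ∧ ∀ B : Set X, B ⊆ O → IsCompact B → toFun B < a

/-- Two functions are comonotone (equiordered). -/
def Comonotone {X : Type*} (φ ψ : X → ℝ) : Prop :=
  ∀ x₁ x₂ : X, 0 ≤ (φ x₁ - φ x₂) * (ψ x₁ - ψ x₂)

/-- The t-normed integral `∫^{∨∗} f dν = sup { ν(f⁻¹[t,1]) ∗ t : t ∈ [0,1] }`. -/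
noncomputable def tInt {X : Type*} [TopologicalSpace X] (T : Tnorm) (ν : Capacity X)
    (f : X → ℝ) : ℝ :=
  sSup ((fun t : ℝ => T.op (ν.toFun (f ⁻¹' Set.Icc t 1)) t) '' Set.Icc (0:ℝ) 1)

/-- Comonotone maxitivity of the t-normed integral. -/
theorem tInt_comonotone_max {X : Type*} [TopologicalSpace X] [CompactSpace X] [T2Space X]
    (T : Tnorm) (ν : Capacity X) (φ ψ : X → ℝ) (hφc : Continuous φ) (hψc : Continuous ψ)
    (hφr : ∀ x, φ x ∈ Set.Icc (0:ℝ) 1) (hψr : ∀ x, ψ x ∈ Set.Icc (0:ℝ) 1)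
    (hco : Comonotone φ ψ) :
    tInt T ν (fun x => max (φ x) (ψ x)) = max (tInt T ν φ) (tInt T ν ψ) := by
  -- notation
  set g : ℝ → ℝ := fun t => T.op (ν.toFun (φ ⁻¹' Set.Icc t 1)) t with hg
  set h : ℝ → ℝ := fun t => T.op (ν.toFun (ψ ⁻¹' Set.Icc t 1)) t with hh
  set m : ℝ → ℝ := fun t => T.op (ν.toFun ((fun x => max (φ x) (ψ x)) ⁻¹' Set.Icc t 1)) t with hm
  have key : ∀ t : ℝ, m t = max (g t) (h t) := by
    intro t
    have hunion : ((fun x => max (φ x) (ψ x)) ⁻¹' Set.Icc t 1)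
        = (φ ⁻¹' Set.Icc t 1) ∪ (ψ ⁻¹' Set.Icc t 1) := by
      ext x
      simp only [Set.mem_preimage, Set.mem_Icc, Set.mem_union]
      constructor
      · rintro ⟨h1, _⟩
        rcases le_max_iff.mp h1 with h' | h'
        · exact Or.inl ⟨h', (hφr x).2⟩
        · exact Or.inr ⟨h', (hψr x).2⟩
      · rintro (⟨h1, _⟩ | ⟨h1, _⟩)
        · exact ⟨le_max_of_le_left h1, max_le (hφr x).2 (hψr x).2⟩
        · exact ⟨le_max_of_le_right h1, max_le (hφr x).2 (hψr x).2⟩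
    have hsub : (φ ⁻¹' Set.Icc t 1) ⊆ (ψ ⁻¹' Set.Icc t 1)
        ∨ (ψ ⁻¹' Set.Icc t 1) ⊆ (φ ⁻¹' Set.Icc t 1) := by
      by_contra hc
      push_neg at hc
      rw [Set.not_subset, Set.not_subset] at hc
      obtain ⟨⟨x₁, hx₁A, hx₁B⟩, ⟨x₂, hx₂B, hx₂A⟩⟩ := hc
      simp only [Set.mem_preimage, Set.mem_Icc, not_and, not_le] at hx₁A hx₁B hx₂A hx₂B
      have hψ1 : ψ x₁ < t := by
        by_contra hcon
        push_neg at hcon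
        exact absurd ((hψr x₁).2) (not_le.mpr (hx₁B hcon))
      have hφ2 : φ x₂ < t := by
        by_contra hcon
        push_neg at hcon
        exact absurd ((hφr x₂).2) (not_le.mpr (hx₂A hcon))
      have h1 : 0 < φ x₁ - φ x₂ := by linarith [hx₁A.1]
      have h2 : ψ x₁ - ψ x₂ < 0 := by linarith [hx₂B.1]
      have := hco x₁ x₂
      nlinarith
    have hν : ν.toFun ((φ ⁻¹' Set.Icc t 1) ∪ (ψ ⁻¹' Set.Icc t 1))
        = max (ν.toFun (φ ⁻¹' Set.Icc t 1)) (ν.toFun (ψ ⁻¹' Set.Icc t 1)) := by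
      rcases hsub with hs | hs
      · rw [Set.union_eq_self_of_subset_left hs]
        exact (max_eq_right (ν.mono' _ _ hs)).symm
      · rw [Set.union_eq_self_of_subset_right hs]
        exact (max_eq_left (ν.mono' _ _ hs)).symm
    simp only [hm, hg, hh, hunion, hν]
    rcases max_cases (ν.toFun (φ ⁻¹' Set.Icc t 1)) (ν.toFun (ψ ⁻¹' Set.Icc t 1)) with
      ⟨he, hle⟩ | ⟨he, hle⟩
    · rw [he]
      exact (max_eq_left (T.mono' _ _ _ _ hle le_rfl)).symm
    · rw [he]
      exact (max_eq_right (T.mono' _ _ _ _ (le_of_lt hle) le_rfl)).symm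
  -- boundedness facts
  have hb : ∀ (f : ℝ → ℝ), (∀ t ∈ Set.Icc (0:ℝ) 1, f t ∈ Set.Icc (0:ℝ) 1) →
      BddAbove (f '' Set.Icc (0:ℝ) 1) := by
    intro f hf
    exact ⟨1, by rintro y ⟨t, ht, rfl⟩; exact (hf t ht).2⟩
  have hgm : ∀ t ∈ Set.Icc (0:ℝ) 1, g t ∈ Set.Icc (0:ℝ) 1 := fun t ht =>
    T.mem' _ _ ⟨ν.nonneg' _, ν.le_one' _⟩ ht
  have hhm : ∀ t ∈ Set.Icc (0:ℝ) 1, h t ∈ Set.Icc (0:ℝ) 1 := fun t ht =>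
    T.mem' _ _ ⟨ν.nonneg' _, ν.le_one' _⟩ ht
  have hmm : ∀ t ∈ Set.Icc (0:ℝ) 1, m t ∈ Set.Icc (0:ℝ) 1 := fun t ht =>
    T.mem' _ _ ⟨ν.nonneg' _, ν.le_one' _⟩ ht
  have hne : (Set.Icc (0:ℝ) 1).Nonempty := ⟨0, by norm_num⟩
  have hImg : ∀ (f : ℝ → ℝ), (f '' Set.Icc (0:ℝ) 1).Nonempty :=
    fun f => hne.image f
  show sSup (m '' Set.Icc (0:ℝ) 1) = max (sSup (g '' Set.Icc (0:ℝ) 1)) (sSup (h '' Set.Icc (0:ℝ) 1))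
  apply le_antisymm
  · apply csSup_le (hImg m)
    rintro y ⟨t, ht, rfl⟩
    rw [key t]
    rcases le_total (g t) (h t) with hle | hle
    · rw [max_eq_right hle]
      exact le_max_of_le_right (le_csSup (hb h hhm) ⟨t, ht, rfl⟩)
    · rw [max_eq_left hle]
      exact le_max_of_le_left (le_csSup (hb g hgm) ⟨t, ht, rfl⟩)
  · apply max_le
    · apply csSup_le (hImg g)
      rintro y ⟨t, ht, rfl⟩
      have : g t ≤ m t := by rw [key t]; exact le_max_left _ _
      exact this.trans (le_csSup (hb m hmm) ⟨t, ht, rfl⟩)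
    · apply csSup_le (hImg h)
      rintro y ⟨t, ht, rfl⟩
      have : h t ≤ m t := by rw [key t]; exact le_max_right _ _
      exact this.trans (le_csSup (hb m hmm) ⟨t, ht, rfl⟩)
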